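/- Let p ≥ 3 be a prime, β ≥ 0, b = p^β, and a ≥ b an integer. Fix a subset S of {1,…,a+b} with |S| = 2b − 1, and define c on the b-element subsets of {1,…,a+b} by c(X) = 1 if X ⊆ S and c(X) = 0 otherwise. Then c is a universal p-ary design for (a,b) whose coefficients satisfy μ_0 = C(2b−1, b) ≠ 0 in k and μ_j = 0 for all 1 ≤ j < b. Moreover, if p^{ν_p(a+1)} < b then c is not similar to the constant design. -/

import Mathlib

open Finset

private lemma add_mul_sub_one_mod {d q r : ℕ} (hr : 0 < r) (hrd : r < d) :
    (d * q + r - 1) % d = r - 1 := by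
  have h : d * q + r - 1 = (r - 1) + d * q := by omega
  rw [h, Nat.add_mul_mod_self_left, Nat.mod_eq_of_lt (by omega)]

private lemma dvd_sub_one_mod {d N : ℕ} (hd : 0 < d) (hdN : d ∣ N) (hN : 0 < N) :
    (N - 1) % d = d - 1 := by
  obtain ⟨m, rfl⟩ := hdN
  have hm : m ≠ 0 := by rintro rfl; simp at hN
  obtain ⟨m', rfl⟩ : ∃ m', m = m' + 1 := ⟨m - 1, by omega⟩
  have h : d * (m' + 1) - 1 = d * m' + (d - 1) := by
    rw [Nat.mul_add, Nat.mul_one]; omega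
  rw [h, Nat.mul_add_mod, Nat.mod_eq_of_lt (by omega)]

private lemma mod_sub_one_of_mod_ne_zero {d N : ℕ} (hd : 0 < d) (h : N % d ≠ 0) :
    (N - 1) % d = N % d - 1 := by
  conv_lhs => rw [← Nat.div_add_mod N d]
  rw [add_mul_sub_one_mod (Nat.pos_of_ne_zero h) (Nat.mod_lt _ hd)]

private lemma prime_dvd_choose_iff_carry {p n c B : ℕ} (hp : p.Prime) (hcn : c ≤ n)
    (hnB : Nat.log p n < B) :
    p ∣ n.choose c ↔ ∃ i ∈ Finset.Ico 1 B, p ^ i ≤ c % p ^ i + (n - c) % p ^ i := by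
  rw [← emultiplicity_ne_zero, Nat.Prime.emultiplicity_choose hp hcn hnB, Nat.cast_ne_zero,
    ← Nat.pos_iff_ne_zero, Finset.card_pos, Finset.filter_nonempty_iff]

private lemma not_dvd_choose_two_pow (p β : ℕ) (hp : p.Prime) (hp3 : 3 ≤ p) :
    ¬ p ∣ (2 * p ^ β - 1).choose (p ^ β) := by
  have hb : 1 ≤ p ^ β := Nat.one_le_pow _ _ hp.pos
  have hmul : p ^ β * 3 ≤ p ^ β * p := Nat.mul_le_mul_left _ hp3
  have hlt : 2 * p ^ β - 1 < p ^ (β + 1) := by rw [pow_succ]; omega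
  rw [prime_dvd_choose_iff_carry hp (by omega) (Nat.log_lt_of_lt_pow (by omega) hlt)]
  rintro ⟨i, hi, hcar⟩
  rw [Finset.mem_Ico] at hi
  have hib : i ≤ β := by omega
  have hpi : 0 < p ^ i := pow_pos hp.pos _
  have hdv : p ^ i ∣ p ^ β := pow_dvd_pow p hib
  have h0 : p ^ β % p ^ i = 0 := Nat.mod_eq_zero_of_dvd hdv
  have hsub : 2 * p ^ β - 1 - p ^ β = p ^ β - 1 := by omega
  have hmod2 : (p ^ β - 1) % p ^ i = p ^ i - 1 :=
    dvd_sub_one_mod hpi hdv (by omega)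
  rw [hsub, h0, hmod2] at hcar
  omega

private lemma dvd_choose_mid (p β m : ℕ) (hp : p.Prime) (hm : 1 ≤ m) (hmb : m < p ^ β) :
    p ∣ (p ^ β - 1 + m).choose m := by
  haveI : Fact p.Prime := ⟨hp⟩
  have hb : 1 ≤ p ^ β := Nat.one_le_pow _ _ hp.pos
  have hp2 : 2 ≤ p := hp.two_le
  have hmul : p ^ β * 2 ≤ p ^ β * p := Nat.mul_le_mul_left _ hp2
  have hlt : p ^ β - 1 + m < p ^ (β + 1) := by rw [pow_succ]; omega
  rw [prime_dvd_choose_iff_carry hp (by omega) (Nat.log_lt_of_lt_pow (by omega) hlt)]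
  set w := padicValNat p m with hw
  have hdvd : p ^ w ∣ m := pow_padicValNat_dvd
  have hwβ : w < β := by
    have h1 : p ^ w ≤ m := Nat.le_of_dvd (by omega) hdvd
    exact (Nat.pow_lt_pow_iff_right hp.one_lt).mp (lt_of_le_of_lt h1 hmb)
  refine ⟨w + 1, Finset.mem_Ico.mpr ⟨by omega, by omega⟩, ?_⟩
  have hmod : m % p ^ (w + 1) ≠ 0 := by
    intro h
    exact pow_succ_padicValNat_not_dvd (by omega) (Nat.dvd_of_mod_eq_zero h)
  have hsub : p ^ β - 1 + m - m = p ^ β - 1 := by omega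
  have hdv : p ^ (w + 1) ∣ p ^ β := pow_dvd_pow p (by omega)
  have hmod2 : (p ^ β - 1) % p ^ (w + 1) = p ^ (w + 1) - 1 :=
    dvd_sub_one_mod (pow_pos hp.pos _) hdv (by omega)
  rw [hsub, hmod2]
  have hpw : 0 < p ^ (w + 1) := pow_pos hp.pos _
  have hmod1 : 1 ≤ m % p ^ (w + 1) := Nat.one_le_iff_ne_zero.mpr hmod
  omega

private lemma not_dvd_choose_padic (p a : ℕ) (hp : p.Prime) :
    ¬ p ∣ (a + p ^ padicValNat p (a + 1)).choose (p ^ padicValNat p (a + 1)) := by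
  haveI : Fact p.Prime := ⟨hp⟩
  set v := padicValNat p (a + 1) with hv
  set q := p ^ v with hqd
  have hq : 0 < q := pow_pos hp.pos _
  have hdvd : q ∣ a + 1 := pow_padicValNat_dvd
  have hndvd : ¬ p ^ (v + 1) ∣ (a + 1) := pow_succ_padicValNat_not_dvd (by omega)
  rw [prime_dvd_choose_iff_carry hp (Nat.le_add_left _ _) (Nat.lt_succ_self _)]
  rintro ⟨i, hi, hcar⟩
  rw [Finset.mem_Ico] at hi
  have hpi : 0 < p ^ i := pow_pos hp.pos _
  have hsub : a + q - q = a := by omega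
  rw [hsub] at hcar
  by_cases hiv : i ≤ v
  · have h0 : q % p ^ i = 0 := Nat.mod_eq_zero_of_dvd (pow_dvd_pow p hiv)
    have h2 : p ^ i ∣ a + 1 := dvd_trans (pow_dvd_pow p hiv) hdvd
    have h3 : a % p ^ i = p ^ i - 1 := by
      have h4 := dvd_sub_one_mod hpi h2 (by omega)
      simpa using h4
    omega
  · have hvi : v + 1 ≤ i := by omega
    have hqlt : q < p ^ i := Nat.pow_lt_pow_right hp.one_lt (by omega)
    have hq0 : q % p ^ i = q := Nat.mod_eq_of_lt hqlt
    have hr : (a + 1) % p ^ i ≠ 0 := fun h =>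
      hndvd (dvd_trans (pow_dvd_pow p hvi) (Nat.dvd_of_mod_eq_zero h))
    have hqdvd : q ∣ p ^ i := pow_dvd_pow p (by omega)
    have hrq : q ∣ (a + 1) % p ^ i := (Nat.dvd_mod_iff hqdvd).mpr hdvd
    have hrlt : (a + 1) % p ^ i < p ^ i := Nat.mod_lt _ hpi
    have hr1 : 1 ≤ (a + 1) % p ^ i := Nat.one_le_iff_ne_zero.mpr hr
    have hrle : (a + 1) % p ^ i ≤ p ^ i - q := by
      obtain ⟨s, hs⟩ := hrq
      obtain ⟨t, ht⟩ := hqdvd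
      have hst : s < t := by
        have h2 := hrlt
        rw [hs, ht] at h2
        exact Nat.lt_of_mul_lt_mul_left h2
      have h3 : q * (s + 1) ≤ q * t := Nat.mul_le_mul_left _ hst
      rw [hs, ht]
      rw [Nat.mul_add, Nat.mul_one] at h3
      omega
    have ha : a % p ^ i = (a + 1) % p ^ i - 1 := by
      have h4 := mod_sub_one_of_mod_ne_zero hpi hr
      simpa using h4
    omega

private lemma count_between {n : ℕ} (S Y : Finset (Fin n)) (b : ℕ) (hY : Y ⊆ S)
    (hYb : Y.card ≤ b) :
    (Finset.univ.filter fun X : Finset (Fin n) => (X.card = b ∧ Y ⊆ X) ∧ X ⊆ S).card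
      = (S.card - Y.card).choose (b - Y.card) := by
  rw [← Finset.card_sdiff_of_subset hY, ← Finset.card_powersetCard (b - Y.card) (S \ Y)]
  apply Finset.card_nbij' (fun X => X \ Y) (fun Z => Z ∪ Y)
  · intro X hX
    simp only [Finset.mem_coe, Finset.mem_filter, Finset.mem_univ, true_and] at hX
    obtain ⟨⟨hXb, hYX⟩, hXS⟩ := hX
    rw [Finset.mem_coe, Finset.mem_powersetCard]
    exact ⟨Finset.sdiff_subset_sdiff hXS subset_rfl, by rw [Finset.card_sdiff_of_subset hYX, hXb]⟩
  · intro Z hZ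
    rw [Finset.mem_coe, Finset.mem_powersetCard] at hZ
    obtain ⟨hZS, hZc⟩ := hZ
    have hdisj : Disjoint Z Y := Finset.disjoint_of_subset_left hZS Finset.sdiff_disjoint
    simp only [Finset.mem_coe, Finset.mem_filter, Finset.mem_univ, true_and]
    refine ⟨⟨?_, Finset.subset_union_right⟩, ?_⟩
    · rw [Finset.card_union_of_disjoint hdisj, hZc]; omega
    · exact Finset.union_subset (hZS.trans (Finset.sdiff_subset)) hY
  · intro X hX
    simp only [Finset.mem_coe, Finset.mem_filter, Finset.mem_univ, true_and] at hX
    exact Finset.sdiff_union_of_subset hX.1.2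
  · intro Z hZ
    rw [Finset.mem_coe, Finset.mem_powersetCard] at hZ
    have hdisj : Disjoint Z Y := Finset.disjoint_of_subset_left hZ.1 Finset.sdiff_disjoint
    exact Finset.union_sdiff_cancel_right hdisj

/-- Let `p ≥ 3` be prime, `k` a field of characteristic `p`,
`b = p^β`, `a ≥ b`, and `S ⊆ {1,…,a+b}` with `|S| = 2b − 1`.  Define `c X = 1` if
`X ⊆ S` and `c X = 0` otherwise.  Then `c` is a universal `p`-ary design for
`(a,b)` with coefficients `μ_0 = C(2b−1, b) ≠ 0` in `k` and `μ_j = 0` for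
`1 ≤ j < b`; moreover if `p^{ν_p(a+1)} < b` then `c` is not similar to the
constant design. -/
theorem pure_power_hemmer_design (p : ℕ) (hp : p.Prime) (hp3 : 3 ≤ p)
    (k : Type*) [Field k] [CharP k p]
    (β a b : ℕ) (hbeq : b = p ^ β) (hab : b ≤ a)
    (S : Finset (Fin (a + b))) (hS : S.card = 2 * b - 1) :
    (∀ t < b, ∀ Y : Finset (Fin (a + b)), Y.card = t →
        ∑ X ∈ univ.filter (fun X : Finset (Fin (a + b)) => X.card = b ∧ Y ⊆ X),
            (if X ⊆ S then (1 : k) else 0)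
          = if t = 0 then (Nat.choose (2 * b - 1) b : k) else 0) ∧
    (Nat.choose (2 * b - 1) b : k) ≠ 0 ∧
    (p ^ padicValNat p (a + 1) < b →
      ¬ ∃ α : k, ∀ j < b,
          (if j = 0 then (Nat.choose (2 * b - 1) b : k) else 0)
            = α * (Nat.choose (a + b - j) (b - j) : k)) := by
  have hb1 : 1 ≤ b := hbeq ▸ Nat.one_le_pow _ _ hp.pos
  have hμ0 : ¬ p ∣ (2 * b - 1).choose b := by
    rw [hbeq]; exact not_dvd_choose_two_pow p β hp hp3
  have hμ0k : ((2 * b - 1).choose b : k) ≠ 0 := by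
    rw [Ne, CharP.cast_eq_zero_iff k p]; exact hμ0
  refine ⟨?_, hμ0k, ?_⟩
  · intro t ht Y hYt
    rw [Finset.sum_boole, Finset.filter_filter]
    by_cases hYS : Y ⊆ S
    · rw [count_between S Y b hYS (by omega), hS, hYt]
      rcases Nat.eq_zero_or_pos t with rfl | ht1
      · simp
      · rw [if_neg (by omega), CharP.cast_eq_zero_iff k p]
        have he : 2 * b - 1 - t = p ^ β - 1 + (b - t) := by omega
        rw [he]
        have hbt : b - t = b - t := rfl
        have h1 : 1 ≤ b - t := by omega
        have h2 : b - t < p ^ β := by omega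
        exact dvd_choose_mid p β (b - t) hp h1 h2
    · have hempty : (Finset.univ.filter
          fun X : Finset (Fin (a + b)) => (X.card = b ∧ Y ⊆ X) ∧ X ⊆ S) = ∅ := by
        rw [Finset.filter_eq_empty_iff]
        rintro X - ⟨⟨-, hYX⟩, hXS⟩
        exact hYS (hYX.trans hXS)
      rw [hempty]
      have ht0 : t ≠ 0 := by
        rintro rfl
        exact hYS ((Finset.card_eq_zero.mp hYt) ▸ Finset.empty_subset S)
      rw [if_neg ht0]
      simp
  · intro hlt hex
    obtain ⟨α, hα⟩ := hex
    have hq1 : 1 ≤ p ^ padicValNat p (a + 1) := Nat.one_le_pow _ _ hp.pos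
    have hj := hα (b - p ^ padicValNat p (a + 1)) (by omega)
    rw [if_neg (by omega)] at hj
    have hbj : b - (b - p ^ padicValNat p (a + 1)) = p ^ padicValNat p (a + 1) := by omega
    have haj : a + b - (b - p ^ padicValNat p (a + 1)) = a + p ^ padicValNat p (a + 1) := by
      omega
    rw [hbj, haj] at hj
    have hC : (((a + p ^ padicValNat p (a + 1)).choose (p ^ padicValNat p (a + 1)) : ℕ) : k)
        ≠ 0 := by
      rw [Ne, CharP.cast_eq_zero_iff k p]; exact not_dvd_choose_padic p a hp
    have hα0 : α = 0 := by
      rcases mul_eq_zero.mp hj.symm with h | h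
      · exact h
      · exact absurd h hC
    have h0 := hα 0 (by omega)
    rw [if_pos rfl, hα0, zero_mul] at h0
    exact hμ0k h0
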